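/- Let q ∈ (0,1/2) be irrational. Then for every N ≥ 1: (i) there exists r ≥ 1 such that κ_{r+i}(q) = κ_i(q) for all 1 ≤ i ≤ N; and (ii) there exists s ≥ 1 such that κ_{s+1}(q) = κ_1(q) − 1 and κ_{s+i}(q) = κ_i(q) for all 2 ≤ i ≤ N. -/

import Mathlib

open Set

/-- Binary sequences. -/
abbrev Bseq := ℕ → Fin 2

/-- The strict unimodal order on binary sequences: `α ≺ β` iff at the least index `r` where
they differ, the sum `∑_{i=0}^r α_i` is even. -/
def umLT (α β : Bseq) : Prop :=
  ∃ r : ℕ, (∀ i, i < r → α i = β i) ∧ α r ≠ β r ∧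
    Even (∑ i ∈ Finset.range (r + 1), ((α i : ℕ)))

/-- `α ⪯ β` in the unimodal order. -/
def umLE (α β : Bseq) : Prop := umLT α β ∨ α = β

/-- The `r`-fold shift `σ^r`. -/
def shiftSeq (r : ℕ) (α : Bseq) : Bseq := fun i => α (i + r)

/-- A sequence is maximal if all its shifts are `⪯` it. -/
def MaximalSeq (α : Bseq) : Prop := ∀ r : ℕ, umLE (shiftSeq r α) α

/-- Membership in `KS`: maximal sequences whose first two symbols are `10`. -/
def KSseq (α : Bseq) : Prop := MaximalSeq α ∧ α 0 = 1 ∧ α 1 = 0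

/-- A (purely) periodic sequence. -/
def PeriodicSeq (α : Bseq) : Prop := ∃ p : ℕ, 0 < p ∧ ∀ i, α (i + p) = α i

/-- The periodic sequence `W^∞` determined by a finite word `W`. -/
def perSeq (W : List (Fin 2)) : Bseq := fun i => W.getD (i % W.length) 0

/-- The sequence `V W^∞`. -/
def preperSeq (V W : List (Fin 2)) : Bseq :=
  fun i => if i < V.length then V.getD i 0 else perSeq W (i - V.length)

/-- The sequence `10 1^∞`. -/
def seq101 : Bseq := fun i => if i = 1 then 0 else 1

/-- The sequence `1σ²(α)`: `1` followed by `α₂ α₃ ⋯`. -/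
def oneShift2 (α : Bseq) : Bseq := fun i => if i = 0 then 1 else α (i + 1)

/-- `κ_i(q)`: `κ_1(q) = ⌊1/q⌋ - 1`, and `κ_i(q) = ⌊i/q⌋ - ⌊(i-1)/q⌋ - 2` for `i ≥ 2`. -/
noncomputable def kap (q : ℝ) (i : ℕ) : ℕ :=
  if i = 1 then (⌊1 / q⌋ - 1).toNat
  else (⌊(i : ℝ) / q⌋ - ⌊((i : ℝ) - 1) / q⌋ - 2).toNat

/-- The word `1 0^{κ_j(q)} 11 0^{κ_{j+1}(q)} 11 ⋯ 11 0^{κ_{j+M}(q)}`: an initial block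
indexed `j` followed by `M` further blocks. -/
noncomputable def tailBody (q : ℝ) (j M : ℕ) : List (Fin 2) :=
  1 :: (List.replicate (kap q j) 0 ++
    (((List.range M).map fun t => 1 :: 1 :: List.replicate (kap q (j + 1 + t)) 0).flatten))

/-- The word `c_q = 1 0^{κ_1(q)} 11 0^{κ_2(q)} 11 ⋯ 11 0^{κ_m(q)} 1`. -/
noncomputable def cqWord (q : ℝ) (m : ℕ) : List (Fin 2) := tailBody q 1 (m - 1) ++ [1]

/-- The word `w_q`, obtained from `c_q` by deleting its last two symbols. -/
noncomputable def wqWord (q : ℝ) (m : ℕ) : List (Fin 2) := (cqWord q m).dropLast.dropLast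

/-- The word `ŵ_q`, the reverse of `w_q`. -/
noncomputable def hwqWord (q : ℝ) (m : ℕ) : List (Fin 2) := (wqWord q m).reverse

/-- The finite word `1 0^{κ_j(q)} 11 0^{κ_{j+1}(q)} ⋯ 11 0^{κ_m(q)} 1`. -/
noncomputable def tailWord (q : ℝ) (j m : ℕ) : List (Fin 2) := tailBody q j (m - j) ++ [1]

/-- The word `1 0^{κ_1(q)-1} 11 0^{κ_2(q)} 11 ⋯` with `M` blocks after the first
(no closing `1`). -/
noncomputable def lowBody (q : ℝ) (M : ℕ) : List (Fin 2) :=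
  1 :: (List.replicate (kap q 1 - 1) 0 ++
    (((List.range M).map fun t => 1 :: 1 :: List.replicate (kap q (2 + t)) 0).flatten))

/-- The finite word `1 0^{κ_1(q)-1} 11 0^{κ_2(q)} ⋯ 11 0^{κ_m(q)} 1`. -/
noncomputable def lowWord (q : ℝ) (m : ℕ) : List (Fin 2) := lowBody q (m - 1) ++ [1]

/-- The infinite sequence `1 0^{κ_j(q)} 11 0^{κ_{j+1}(q)} 11 0^{κ_{j+2}(q)} 11 ⋯`. -/
noncomputable def tailSeq (q : ℝ) (j : ℕ) : Bseq := fun i => (tailBody q j (i + 1)).getD i 0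

/-- The infinite sequence `1 0^{κ_1(q)-1} 11 0^{κ_2(q)} 11 0^{κ_3(q)} 11 ⋯`. -/
noncomputable def lowSeq (q : ℝ) : Bseq := fun i => (lowBody q (i + 1)).getD i 0

/-- The height `q(α) = inf({q ∈ (0,1/2] ∩ ℚ : (c_q0)^∞ ≺ α} ∪ {1/2})`. -/
noncomputable def height (α : Bseq) : ℝ :=
  sInf ({x : ℝ | ∃ q : ℚ, x = (q : ℝ) ∧ 0 < q ∧ q ≤ 1 / 2 ∧
    umLT (perSeq (cqWord (q : ℝ) q.num.toNat ++ [0])) α} ∪ {1 / 2})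

/-- A unimodal map `f : [a,b] → [a,b]` with turning point `c`. -/
structure Unimodal (a b c : ℝ) (f : ℝ → ℝ) : Prop where
  a_lt_b : a < b
  c_mem : c ∈ Ioo a b
  cont : ContinuousOn f (Icc a b)
  maps : MapsTo f (Icc a b) (Icc a b)
  mono : StrictMonoOn f (Icc a c)
  anti : StrictAntiOn f (Icc c b)
  map_c : f c = b
  map_b : f b = a

/-- `α` is an itinerary of `x` under the unimodal map `f` with turning point `c`. -/
def IsItin (f : ℝ → ℝ) (a b c x : ℝ) (α : Bseq) : Prop :=
  ∀ r : ℕ, (α r = 0 → f^[r] x ∈ Icc a c) ∧ (α r = 1 → f^[r] x ∈ Icc c b)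

/-- `κ` is the kneading sequence of `f`: the itinerary of `b` smallest in the unimodal order. -/
def IsKneading (f : ℝ → ℝ) (a b c : ℝ) (κ : Bseq) : Prop :=
  IsItin f a b c b κ ∧ ∀ β : Bseq, IsItin f a b c b β → umLE κ β

/-- The standing convention on unimodal maps. -/
structure Convention (f : ℝ → ℝ) (a b c : ℝ) (κ : Bseq) : Prop where
  kneading : IsKneading f a b c κ
  gt101 : umLT seq101 κ
  itin_inj : ¬ PeriodicSeq κ → ∀ x ∈ Icc a b, ∀ y ∈ Icc a b, ∀ α : Bseq,
      IsItin f a b c x α → IsItin f a b c y α → x = y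
  two_fixed : ∀ n : ℕ, 0 < n → ∀ μ : Bseq,
      {x | x ∈ Icc a b ∧ f^[n] x = x ∧ IsItin f a b c x μ}.encard ≤ 2 ∧
      ∀ x ∈ {x | x ∈ Icc a b ∧ f^[n] x = x ∧ IsItin f a b c x μ},
        ∀ y ∈ {x | x ∈ Icc a b ∧ f^[n] x = x ∧ IsItin f a b c x μ},
          x ≠ y → ∃ r : ℕ, κ = shiftSeq r μ

section Stmt19Aux

lemma frac_irr {θ : ℝ} (h : Irrational θ) : Irrational (Int.fract θ) := by
  rw [Int.fract]; exact h.sub_intCast _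

/-- The subgroup ℤ + ℤθ contains elements in (0, ε). -/
lemma exists_small_elt {θ : ℝ} (hθ : Irrational θ) {ε : ℝ} (hε : 0 < ε) :
    ∃ m n : ℤ, 0 < (m : ℝ) + n * θ ∧ (m : ℝ) + n * θ < ε := by
  set S : AddSubgroup ℝ :=
    { carrier := {x | ∃ m n : ℤ, x = (m : ℝ) + n * θ}
      zero_mem' := ⟨0, 0, by simp⟩
      add_mem' := fun h1 h2 => by
        obtain ⟨m1, n1, rfl⟩ := h1
        obtain ⟨m2, n2, rfl⟩ := h2
        exact ⟨m1 + m2, n1 + n2, by push_cast; ring⟩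
      neg_mem' := fun h1 => by
        obtain ⟨m, n, rfl⟩ := h1
        exact ⟨-m, -n, by push_cast; ring⟩ } with hS
  have hdense : Dense (S : Set ℝ) := by
    rcases S.dense_or_cyclic with h | ⟨a, ha⟩
    · exact h
    · exfalso
      have h1 : (1 : ℝ) ∈ S := ⟨1, 0, by simp⟩
      have hθS : θ ∈ S := ⟨0, 1, by simp⟩
      rw [ha, AddSubgroup.mem_closure_singleton] at h1 hθS
      obtain ⟨p, hp⟩ := h1
      obtain ⟨k, hk⟩ := hθS
      rw [zsmul_eq_mul] at hp hk
      have hp0 : (p : ℝ) ≠ 0 := by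
        intro h; rw [h, zero_mul] at hp; exact one_ne_zero hp.symm
      have hpz : p ≠ 0 := fun h => hp0 (by simp [h])
      refine hθ ⟨(k : ℚ) / (p : ℚ), ?_⟩
      have ha' : a = 1 / (p : ℝ) := by field_simp at hp ⊢; linarith [hp]
      rw [← hk, ha']
      push_cast
      field_simp
  obtain ⟨x, hxS, hx⟩ := hdense.exists_mem_open isOpen_Ioo
    (⟨ε / 2, by constructor <;> linarith⟩ : (Ioo (0:ℝ) ε).Nonempty)
  obtain ⟨m, n, rfl⟩ := hxS
  exact ⟨m, n, hx.1, hx.2⟩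

lemma exists_fract_near {θ : ℝ} (hθ : Irrational θ) {ε : ℝ} (hε : 0 < ε) (hε1 : ε < 1) :
    ∃ m : ℕ, 1 ≤ m ∧ (Int.fract ((m : ℝ) * θ) ∈ Set.Ioo 0 ε ∨
      Int.fract ((m : ℝ) * θ) ∈ Set.Ioo (1 - ε) 1) := by
  obtain ⟨m, n, hx0, hxε⟩ := exists_small_elt hθ hε
  set x : ℝ := (m : ℝ) + n * θ with hxdef
  have hx1 : x < 1 := lt_trans hxε hε1
  have hfx : Int.fract x = x := Int.fract_eq_self.mpr ⟨le_of_lt hx0, hx1⟩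
  rcases lt_trichotomy n 0 with hn | hn | hn
  · -- n < 0 : use (-n).toNat
    refine ⟨(-n).toNat, ?_, Or.inr ?_⟩
    · have : 0 < -n := by omega
      omega
    · have hcast : (((-n).toNat : ℝ)) = -(n : ℝ) := by
        have : ((-n).toNat : ℤ) = -n := Int.toNat_of_nonneg (by omega)
        exact_mod_cast congrArg (Int.cast : ℤ → ℝ) this
      have heq : ((-n).toNat : ℝ) * θ = (m : ℝ) - x := by
        rw [hcast, hxdef]; ring
      have hxne : Int.fract x ≠ 0 := by rw [hfx]; exact ne_of_gt hx0
      have heq2 : (m : ℝ) - x = ((m : ℤ) : ℝ) + (-x) := by push_cast; ring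
      rw [heq, heq2, Int.fract_intCast_add, Int.fract_neg hxne, hfx]
      constructor <;> [linarith; linarith]
  · -- n = 0 : contradiction
    exfalso
    have hxm : x = (m : ℝ) := by rw [hxdef, hn]; push_cast; ring
    rw [hxm] at hx0 hx1
    have h1 : 0 < m := by exact_mod_cast hx0
    have h2 : (1 : ℝ) ≤ (m : ℝ) := by exact_mod_cast h1
    linarith
  · -- n > 0
    refine ⟨n.toNat, by omega, Or.inl ?_⟩
    have hcast : ((n.toNat : ℝ)) = (n : ℝ) := by
      have : (n.toNat : ℤ) = n := Int.toNat_of_nonneg (by omega)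
      exact_mod_cast congrArg (Int.cast : ℤ → ℝ) this
    have heq : (n.toNat : ℝ) * θ = x - (m : ℝ) := by rw [hcast, hxdef]; ring
    rw [heq, Int.fract_sub_intCast, hfx]
    exact ⟨hx0, hxε⟩

/-- Multiples of a small irrational δ reach (1-δ, 1). -/
lemma mult_trick {δ : ℝ} (hδ : Irrational δ) (h0 : 0 < δ) (h1 : δ < 1) :
    ∃ k : ℕ, 1 ≤ k ∧ 1 - δ < (k : ℝ) * δ ∧ (k : ℝ) * δ < 1 := by
  have hinv : 1 < 1 / δ := (one_lt_div h0).mpr h1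
  set k : ℕ := ⌊1 / δ⌋.toNat with hk
  have hfl1 : 1 ≤ ⌊1 / δ⌋ := Int.le_floor.mpr (by exact_mod_cast hinv.le)
  have hk1 : 1 ≤ k := by omega
  have hkcast : ((k : ℝ)) = ((⌊1 / δ⌋ : ℤ) : ℝ) := by
    have : ((k : ℕ) : ℤ) = ⌊1 / δ⌋ := Int.toNat_of_nonneg (by omega)
    exact_mod_cast congrArg (Int.cast : ℤ → ℝ) this
  have hkle : (k : ℝ) ≤ 1 / δ := hkcast ▸ Int.floor_le _
  have hklt : 1 / δ < (k : ℝ) + 1 := by rw [hkcast]; exact Int.lt_floor_add_one _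
  have hle1 : (k : ℝ) * δ ≤ 1 := by
    calc (k : ℝ) * δ ≤ (1 / δ) * δ := by nlinarith
    _ = 1 := by field_simp
  have hne1 : (k : ℝ) * δ ≠ 1 := by
    intro h
    have hk0 : (k : ℝ) ≠ 0 := by positivity
    exact hδ ⟨(1 : ℚ) / (k : ℚ), by push_cast; field_simp; linarith [h]⟩
  have hlt1 : (k : ℝ) * δ < 1 := lt_of_le_of_ne hle1 hne1
  have h5 : 1 < ((k : ℝ) + 1) * δ := (div_lt_iff₀ h0).mp hklt
  have hgt : 1 - δ < (k : ℝ) * δ := by nlinarith [h5]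
  exact ⟨k, hk1, hgt, hlt1⟩

lemma exists_fract_both {θ : ℝ} (hθ : Irrational θ) {ε : ℝ} (hε : 0 < ε) (hε1 : ε < 1) :
    (∃ s : ℕ, 1 ≤ s ∧ Int.fract ((s : ℝ) * θ) ∈ Set.Ioo 0 ε) ∧
    (∃ r : ℕ, 1 ≤ r ∧ Int.fract ((r : ℝ) * θ) ∈ Set.Ioo (1 - ε) 1) := by
  obtain ⟨m, hm1, hm⟩ := exists_fract_near hθ hε hε1
  have hmθ : Irrational ((m : ℝ) * θ) := hθ.natCast_mul (by omega)
  have hirr : Irrational (Int.fract ((m : ℝ) * θ)) := frac_irr hmθ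
  have key : ∀ a : ℕ, 1 ≤ a → ∀ k : ℕ,
      ((k * a : ℕ) : ℝ) * θ =
        ((k * ⌊(a : ℝ) * θ⌋ : ℤ) : ℝ) + (k : ℝ) * Int.fract ((a : ℝ) * θ) := by
    intro a _ k
    have h1 : (a : ℝ) * θ = (⌊(a : ℝ) * θ⌋ : ℝ) + Int.fract ((a : ℝ) * θ) :=
      (Int.floor_add_fract _).symm
    push_cast
    nlinarith [h1]
  rcases hm with hlo | hhi
  · -- fract(mθ) small; build the hi witness by multiplying
    set δ := Int.fract ((m : ℝ) * θ) with hδdef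
    obtain ⟨k, hk1, hgt, hlt⟩ := mult_trick hirr hlo.1 (lt_trans hlo.2 hε1)
    refine ⟨⟨m, hm1, hlo⟩, ⟨k * m, Nat.mul_pos hk1 hm1, ?_⟩⟩
    have : Int.fract (((k * m : ℕ) : ℝ) * θ) = (k : ℝ) * δ := by
      rw [key m hm1 k, Int.fract_intCast_add,
        Int.fract_eq_self.mpr ⟨mul_nonneg (Nat.cast_nonneg k) (Int.fract_nonneg _), hlt⟩]
    rw [this]
    exact ⟨by linarith [hlo.2], hlt⟩
  · -- fract(mθ) near 1; build the lo witness
    set δ := 1 - Int.fract ((m : ℝ) * θ) with hδdef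
    have hδirr : Irrational δ := by
      rw [hδdef]
      simpa using hirr.intCast_sub 1
    have hδ0 : 0 < δ := by simp only [hδdef]; linarith [Int.fract_lt_one ((m : ℝ) * θ)]
    have hδε : δ < ε := by simp only [hδdef]; linarith [hhi.1]
    obtain ⟨k, hk1, hgt, hlt⟩ := mult_trick hδirr hδ0 (lt_trans hδε hε1)
    have hval : Int.fract (((k * m : ℕ) : ℝ) * θ) = 1 - (k : ℝ) * δ := by
      have heq : ((k * m : ℕ) : ℝ) * θ =
          ((k * ⌊(m : ℝ) * θ⌋ + k : ℤ) : ℝ) + (-((k : ℝ) * δ)) := by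
        rw [key m hm1 k]
        push_cast
        simp only [hδdef]
        ring
      rw [heq, Int.fract_intCast_add]
      have hkδ : Int.fract (-((k : ℝ) * δ)) = 1 - Int.fract ((k : ℝ) * δ) := by
        apply Int.fract_neg
        rw [Int.fract_eq_self.mpr ⟨mul_nonneg (Nat.cast_nonneg k) hδ0.le, hlt⟩]
        have : (0:ℝ) < (k:ℝ) := by exact_mod_cast hk1
        nlinarith
      rw [hkδ, Int.fract_eq_self.mpr ⟨mul_nonneg (Nat.cast_nonneg k) hδ0.le, hlt⟩]
    refine ⟨⟨k * m, Nat.mul_pos hk1 hm1, ?_⟩, ⟨m, hm1, hhi⟩⟩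
    rw [hval]
    constructor
    · linarith
    · linarith

/-- Floor splitting. -/
lemma floor_split {θ : ℝ} (x : ℝ) (hne : Int.fract x + Int.fract θ ≠ 1) :
    ⌊x + θ⌋ = ⌊x⌋ + ⌊θ⌋ + (if 1 - Int.fract θ < Int.fract x then 1 else 0) := by
  have hx : x = (⌊x⌋ : ℝ) + Int.fract x := (Int.floor_add_fract _).symm
  have hθ : θ = (⌊θ⌋ : ℝ) + Int.fract θ := (Int.floor_add_fract _).symm
  have heq : x + θ = ((⌊x⌋ + ⌊θ⌋ : ℤ) : ℝ) + (Int.fract x + Int.fract θ) := by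
    push_cast; linarith
  rw [heq, Int.floor_intCast_add]
  have h1 := Int.fract_nonneg x
  have h2 := Int.fract_nonneg θ
  have h3 := Int.fract_lt_one x
  have h4 := Int.fract_lt_one θ
  split_ifs with h
  · have : ⌊Int.fract x + Int.fract θ⌋ = 1 := by
      rw [Int.floor_eq_iff]
      push_cast
      constructor <;> linarith
    omega
  · have : ⌊Int.fract x + Int.fract θ⌋ = 0 := by
      rw [Int.floor_eq_zero_iff]
      constructor
      · linarith
      · rcases lt_or_eq_of_le (not_lt.mp h) with h' | h'
        · linarith
        · exact absurd (by linarith) hne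
    omega

end Stmt19Aux

lemma kap_two {q : ℝ} (h0 : 0 < q) (h2 : q < 1 / 2) (hirr : Irrational q)
    {i : ℕ} (hi : 2 ≤ i) :
    kap q i = (⌊1 / q⌋ - 2).toNat +
      (if 1 - Int.fract (1 / q) < Int.fract ((((i - 1 : ℕ)) : ℝ) * (1 / q)) then 1 else 0) := by
  set θ : ℝ := 1 / q with hθdef
  have hq0 : q ≠ 0 := ne_of_gt h0
  have hθirr : Irrational θ := by rw [hθdef, one_div]; exact hirr.inv
  have hθ2 : 2 < θ := by rw [hθdef, lt_div_iff₀ h0]; linarith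
  have hfl2 : 2 ≤ ⌊θ⌋ := Int.le_floor.mpr (by exact_mod_cast hθ2.le)
  have hi1 : i ≠ 1 := by omega
  have hcast : ((i : ℝ)) = (((i - 1 : ℕ)) : ℝ) + 1 := by
    have : i - 1 + 1 = i := by omega
    exact_mod_cast (congrArg (Nat.cast : ℕ → ℝ) this).symm
  have hdiv : ∀ x : ℝ, x / q = x * θ := fun x => by rw [hθdef]; field_simp
  set x : ℝ := (((i - 1 : ℕ)) : ℝ) * θ with hxdef
  have hiθ : (i : ℝ) / q = x + θ := by rw [hdiv, hcast]; ring
  have hi1θ : ((i : ℝ) - 1) / q = x := by rw [hdiv, hcast]; ring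
  have hne : Int.fract x + Int.fract θ ≠ 1 := by
    intro hsum
    have hix : x + θ = ((⌊x⌋ + ⌊θ⌋ + 1 : ℤ) : ℝ) := by
      have h1 : x = (⌊x⌋ : ℝ) + Int.fract x := (Int.floor_add_fract _).symm
      have h2 : θ = (⌊θ⌋ : ℝ) + Int.fract θ := (Int.floor_add_fract _).symm
      push_cast
      linarith
    have hiirr : Irrational ((i : ℝ) * θ) := hθirr.natCast_mul (by omega)
    rw [← hdiv, hiθ, hix] at hiirr
    exact hiirr.ne_int _ rfl
  have hsplit := floor_split (θ := θ) x hne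
  rw [kap, if_neg hi1, hiθ, hi1θ, hsplit]
  split_ifs with h
  · omega
  · omega

lemma kap_one (q : ℝ) : kap q 1 = (⌊1 / q⌋ - 1).toNat := by rw [kap, if_pos rfl]

/-- For irrational `q ∈ (0,1/2)` and every `N ≥ 1`, the sequence `κ_i(q)`
recurs: some shift by `r ≥ 1` reproduces its first `N` terms; and some shift by `s ≥ 1`
reproduces `κ_1(q) - 1` followed by `κ_2(q), …, κ_N(q)`. -/
theorem stmt19 (q : ℝ) (h0 : 0 < q) (h2 : q < 1 / 2) (hirr : Irrational q)
    (N : ℕ) (hN : 1 ≤ N) :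
    (∃ r : ℕ, 1 ≤ r ∧ ∀ i, 1 ≤ i → i ≤ N → kap q (r + i) = kap q i) ∧
    (∃ s : ℕ, 1 ≤ s ∧ kap q (s + 1) = kap q 1 - 1 ∧
      ∀ i, 2 ≤ i → i ≤ N → kap q (s + i) = kap q i) := by
  have hq0 : q ≠ 0 := ne_of_gt h0
  set θ : ℝ := 1 / q with hθdef
  have hθirr : Irrational θ := by rw [hθdef, one_div]; exact hirr.inv
  have hθ2 : 2 < θ := by rw [hθdef, lt_div_iff₀ h0]; linarith
  have hfl2 : 2 ≤ ⌊θ⌋ := Int.le_floor.mpr (by exact_mod_cast hθ2.le)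
  -- abbreviations
  have hFirr : ∀ j : ℕ, 1 ≤ j → Irrational (Int.fract ((j : ℝ) * θ)) :=
    fun j hj => frac_irr (hθirr.natCast_mul (by omega))
  have hFpos : ∀ j : ℕ, 1 ≤ j → 0 < Int.fract ((j : ℝ) * θ) := fun j hj =>
    lt_of_le_of_ne (Int.fract_nonneg _) (Ne.symm (hFirr j hj).ne_zero)
  have hFlt : ∀ j : ℕ, Int.fract ((j : ℝ) * θ) < 1 := fun j => Int.fract_lt_one _
  have hF1 : Int.fract (((1 : ℕ) : ℝ) * θ) = Int.fract θ := by norm_num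
  have hFnec : ∀ j : ℕ, 1 ≤ j → Int.fract ((j : ℝ) * θ) ≠ 1 - Int.fract θ := by
    intro j hj heq
    have h1 : (j : ℝ) * θ = (⌊(j : ℝ) * θ⌋ : ℝ) + Int.fract ((j : ℝ) * θ) :=
      (Int.floor_add_fract _).symm
    have h2 : θ = (⌊θ⌋ : ℝ) + Int.fract θ := (Int.floor_add_fract _).symm
    have hirr2 : Irrational ((((j + 1 : ℕ)) : ℝ) * θ) := hθirr.natCast_mul (by omega)
    apply hirr2.ne_int (⌊(j : ℝ) * θ⌋ + ⌊θ⌋ + 1)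
    push_cast
    linear_combination h1 + h2 + heq
  have addF : ∀ a b : ℕ, Int.fract (((a + b : ℕ) : ℝ) * θ) =
      Int.fract (Int.fract ((a : ℝ) * θ) + Int.fract ((b : ℝ) * θ)) := by
    intro a b
    have h1 : (a : ℝ) * θ = (⌊(a : ℝ) * θ⌋ : ℝ) + Int.fract ((a : ℝ) * θ) :=
      (Int.floor_add_fract _).symm
    have h2 : (b : ℝ) * θ = (⌊(b : ℝ) * θ⌋ : ℝ) + Int.fract ((b : ℝ) * θ) :=
      (Int.floor_add_fract _).symm
    have h3 : ((a + b : ℕ) : ℝ) * θ = ((⌊(a : ℝ) * θ⌋ + ⌊(b : ℝ) * θ⌋ : ℤ) : ℝ) +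
        (Int.fract ((a : ℝ) * θ) + Int.fract ((b : ℝ) * θ)) := by
      push_cast
      linarith
    rw [h3, Int.fract_intCast_add]
  -- the gap ε
  have hne : (Finset.Icc 1 N).Nonempty := ⟨1, by simp [hN]⟩
  set g : ℕ → ℝ := fun j => min (min (Int.fract ((j : ℝ) * θ)) (1 - Int.fract ((j : ℝ) * θ)))
    |Int.fract ((j : ℝ) * θ) - (1 - Int.fract θ)| with hgdef
  set ε : ℝ := (Finset.Icc 1 N).inf' hne g with hεdef
  have hεle : ∀ j : ℕ, 1 ≤ j → j ≤ N → ε ≤ g j := fun j hj1 hj2 =>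
    Finset.inf'_le g (Finset.mem_Icc.mpr ⟨hj1, hj2⟩)
  have hεleF : ∀ j : ℕ, 1 ≤ j → j ≤ N → ε ≤ Int.fract ((j : ℝ) * θ) := fun j hj1 hj2 =>
    (hεle j hj1 hj2).trans ((min_le_left _ _).trans (min_le_left _ _))
  have hεleF' : ∀ j : ℕ, 1 ≤ j → j ≤ N → ε ≤ 1 - Int.fract ((j : ℝ) * θ) := fun j hj1 hj2 =>
    (hεle j hj1 hj2).trans ((min_le_left _ _).trans (min_le_right _ _))
  have hεleabs : ∀ j : ℕ, 1 ≤ j → j ≤ N →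
      ε ≤ |Int.fract ((j : ℝ) * θ) - (1 - Int.fract θ)| := fun j hj1 hj2 =>
    (hεle j hj1 hj2).trans (min_le_right _ _)
  have hεpos : 0 < ε := by
    rw [hεdef, Finset.lt_inf'_iff]
    intro j hj
    rw [Finset.mem_Icc] at hj
    have ha := hFpos j hj.1
    have hb := hFlt j
    have habs : 0 < |Int.fract ((j : ℝ) * θ) - (1 - Int.fract θ)| :=
      abs_pos.mpr (sub_ne_zero.mpr (hFnec j hj.1))
    simp only [hgdef, lt_min_iff]
    exact ⟨⟨ha, by linarith⟩, habs⟩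
  have hεfθ : ε ≤ Int.fract θ := by
    have := hεleF 1 le_rfl hN
    rwa [hF1] at this
  have hεc : ε ≤ 1 - Int.fract θ := by
    have := hεleF' 1 le_rfl hN
    rwa [hF1] at this
  have hε1 : ε < 1 := lt_of_le_of_lt hεfθ (Int.fract_lt_one θ)
  obtain ⟨⟨s, hs1, hslo⟩, ⟨r, hr1, hrhi⟩⟩ := exists_fract_both hθirr hεpos hε1
  constructor
  · -- part (i)
    refine ⟨r, hr1, ?_⟩
    set δ : ℝ := 1 - Int.fract ((r : ℝ) * θ) with hδdef
    have hδ0 : 0 < δ := by rw [hδdef]; linarith [hrhi.2]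
    have hδε : δ < ε := by rw [hδdef]; linarith [hrhi.1]
    have keyshift : ∀ j : ℕ, 1 ≤ j → j ≤ N →
        Int.fract (((r + j : ℕ) : ℝ) * θ) = Int.fract ((j : ℝ) * θ) - δ := by
      intro j hj1 hj2
      have hFj := hεleF j hj1 hj2
      have hFj1 := hFlt j
      have h3 : Int.fract ((r : ℝ) * θ) + Int.fract ((j : ℝ) * θ) =
          ((1 : ℤ) : ℝ) + (Int.fract ((j : ℝ) * θ) - δ) := by
        rw [hδdef]; push_cast; ring
      rw [addF, h3, Int.fract_intCast_add,
        Int.fract_eq_self.mpr ⟨by linarith, by linarith⟩]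
    intro i hi1 hiN
    rcases eq_or_lt_of_le hi1 with hi | hi
    · -- i = 1
      rw [← hi]
      rw [kap_two h0 h2 hirr (show 2 ≤ r + 1 by omega), kap_one, ← hθdef]
      have hr' : r + 1 - 1 = r + 0 := by omega
      rw [hr']
      have hcond : 1 - Int.fract θ < Int.fract (((r + 0 : ℕ) : ℝ) * θ) := by
        simp only [Nat.add_zero]
        linarith [hrhi.1]
      rw [if_pos hcond]
      omega
    · -- i ≥ 2
      have hi2 : 2 ≤ i := hi
      rw [kap_two h0 h2 hirr (show 2 ≤ r + i by omega), kap_two h0 h2 hirr hi2, ← hθdef]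
      have hj : r + i - 1 = r + (i - 1) := by omega
      rw [hj, keyshift (i - 1) (by omega) (by omega)]
      congr 1
      have hjabs := hεleabs (i - 1) (by omega) (by omega)
      by_cases hc : 1 - Int.fract θ < Int.fract (((i - 1 : ℕ) : ℝ) * θ)
      · rw [if_pos hc, if_pos ?_]
        rw [abs_of_pos (by linarith)] at hjabs
        linarith
      · rw [if_neg hc, if_neg ?_]
        push_neg at hc ⊢
        linarith
  · -- part (ii)
    refine ⟨s, hs1, ?_, ?_⟩
    · rw [kap_two h0 h2 hirr (show 2 ≤ s + 1 by omega), kap_one, ← hθdef]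
      have hs' : s + 1 - 1 = s + 0 := by omega
      rw [hs']
      have hcond : ¬ (1 - Int.fract θ < Int.fract (((s + 0 : ℕ) : ℝ) * θ)) := by
        simp only [Nat.add_zero]
        push_neg
        linarith [hslo.2]
      rw [if_neg hcond]
      omega
    · set δ : ℝ := Int.fract ((s : ℝ) * θ) with hδdef
      have hδ0 : 0 < δ := hslo.1
      have hδε : δ < ε := hslo.2
      have keyshift : ∀ j : ℕ, 1 ≤ j → j ≤ N →
          Int.fract (((s + j : ℕ) : ℝ) * θ) = Int.fract ((j : ℝ) * θ) + δ := by
        intro j hj1 hj2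
        have hFj := hεleF' j hj1 hj2
        have hFj0 := hFpos j hj1
        rw [addF, add_comm δ, Int.fract_eq_self.mpr ⟨by linarith, by linarith⟩]
      intro i hi2 hiN
      rw [kap_two h0 h2 hirr (show 2 ≤ s + i by omega), kap_two h0 h2 hirr hi2, ← hθdef]
      have hj : s + i - 1 = s + (i - 1) := by omega
      rw [hj, keyshift (i - 1) (by omega) (by omega)]
      congr 1
      have hjabs := hεleabs (i - 1) (by omega) (by omega)
      by_cases hc : 1 - Int.fract θ < Int.fract (((i - 1 : ℕ) : ℝ) * θ)
      · rw [if_pos hc, if_pos (by linarith)]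
      · rw [if_neg hc, if_neg ?_]
        push_neg at hc ⊢
        rw [abs_of_nonpos (by linarith)] at hjabs
        linarith
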